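/- Let π ∈ Δ_K have all positive coordinates and 0 < β₁ < β₂. Then max_k (π_{β₁})_k ≤ max_k (π_{β₂})_k, where (π_β)_k = π_k^β / Σ_j π_j^β; i.e., the maximal probability is a nondecreasing function of β. -/

import Mathlib

open Real Finset

theorem tempered_maxProb_monotone {K : ℕ} (p : Fin (K + 1) → ℝ)
    (hpos : ∀ k, 0 < p k) (hsum : ∑ k, p k = 1)
    (β₁ β₂ : ℝ) (h1 : 0 < β₁) (h12 : β₁ < β₂) :
    Finset.univ.sup' Finset.univ_nonempty (fun k => p k ^ β₁ / ∑ j, p j ^ β₁)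
      ≤ Finset.univ.sup' Finset.univ_nonempty (fun k => p k ^ β₂ / ∑ j, p j ^ β₂) := by
  obtain ⟨k0, -, hk0⟩ := Finset.exists_max_image Finset.univ p Finset.univ_nonempty
  have hmax : ∀ k, p k ≤ p k0 := fun k => hk0 k (Finset.mem_univ k)
  have hS1 : (0:ℝ) < ∑ j, p j ^ β₁ :=
    Finset.sum_pos (fun j _ => Real.rpow_pos_of_pos (hpos j) _) Finset.univ_nonempty
  have hS2 : (0:ℝ) < ∑ j, p j ^ β₂ :=
    Finset.sum_pos (fun j _ => Real.rpow_pos_of_pos (hpos j) _) Finset.univ_nonempty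
  have h2 : (0:ℝ) < β₂ := h1.trans h12
  have hle : Finset.univ.sup' Finset.univ_nonempty (fun k => p k ^ β₁ / ∑ j, p j ^ β₁)
      ≤ p k0 ^ β₁ / ∑ j, p j ^ β₁ := by
    apply Finset.sup'_le
    intro k _
    exact div_le_div_of_nonneg_right
      (Real.rpow_le_rpow (hpos k).le (hmax k) h1.le) hS1.le
  refine hle.trans (le_trans ?_ (Finset.le_sup' (fun k => p k ^ β₂ / ∑ j, p j ^ β₂)
    (Finset.mem_univ k0)))
  rw [div_le_div_iff₀ hS1 hS2]
  have key : (∑ j, p j ^ β₂) ≤ (∑ j, p j ^ β₁) * p k0 ^ (β₂ - β₁) := by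
    rw [Finset.sum_mul]
    apply Finset.sum_le_sum
    intro j _
    calc p j ^ β₂ = p j ^ β₁ * p j ^ (β₂ - β₁) := by
          rw [← Real.rpow_add (hpos j)]; ring_nf
      _ ≤ p j ^ β₁ * p k0 ^ (β₂ - β₁) := by
          apply mul_le_mul_of_nonneg_left
            (Real.rpow_le_rpow (hpos j).le (hmax j) (by linarith))
            (Real.rpow_pos_of_pos (hpos j) _).le
  calc p k0 ^ β₁ * ∑ j, p j ^ β₂
      ≤ p k0 ^ β₁ * ((∑ j, p j ^ β₁) * p k0 ^ (β₂ - β₁)) :=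
        mul_le_mul_of_nonneg_left key (Real.rpow_pos_of_pos (hpos k0) _).le
    _ = p k0 ^ β₂ * ∑ j, p j ^ β₁ := by
        rw [← mul_assoc, mul_comm (p k0 ^ β₁) _, mul_assoc, ← Real.rpow_add (hpos k0)]
        ring_nf
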